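/- A nonzero lattice vector v ∈ τ is a Voronoï vector of τ if and only if v is a vector of minimal Euclidean norm in the coset v + 2τ. -/

import Mathlib

/-- The full-rank lattice in Euclidean space generated by the columns of `A`. -/
def latticeOf {n : ℕ} (A : Matrix (Fin n) (Fin n) ℝ) : Set (EuclideanSpace ℝ (Fin n)) :=
  {v | ∃ x : Fin n → ℤ, ∀ i, v i = A.mulVec (fun j => (x j : ℝ)) i}

/-- The Voronoï cell of a lattice: points at least as close to `0` as to every
lattice point. -/
def voronoiCell {n : ℕ} (τ : Set (EuclideanSpace ℝ (Fin n))) : Set (EuclideanSpace ℝ (Fin n)) :=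
  {z | ∀ x ∈ τ, ‖z‖ ≤ ‖z - x‖}

lemma latticeOf_neg {n : ℕ} {A : Matrix (Fin n) (Fin n) ℝ} {x : EuclideanSpace ℝ (Fin n)}
    (hx : x ∈ latticeOf A) : -x ∈ latticeOf A := by
  obtain ⟨c, hc⟩ := hx
  refine ⟨-c, fun i => ?_⟩
  have : (fun j => ((-c) j : ℝ)) = -(fun j => (c j : ℝ)) := by
    funext j; simp
  rw [this, Matrix.mulVec_neg]
  have : (-x) i = -(x i) := rfl
  rw [this, hc i]
  rfl

lemma latticeOf_add {n : ℕ} {A : Matrix (Fin n) (Fin n) ℝ} {x y : EuclideanSpace ℝ (Fin n)}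
    (hx : x ∈ latticeOf A) (hy : y ∈ latticeOf A) : x + y ∈ latticeOf A := by
  obtain ⟨c, hc⟩ := hx
  obtain ⟨d, hd⟩ := hy
  refine ⟨c + d, fun i => ?_⟩
  have h1 : (fun j => ((c + d) j : ℝ)) = (fun j => (c j : ℝ)) + (fun j => (d j : ℝ)) := by
    funext j; simp
  rw [h1, Matrix.mulVec_add]
  have : (x + y) i = x i + y i := rfl
  rw [this, hc i, hd i]
  rfl

theorem stmt_13 {n : ℕ} (A : Matrix (Fin n) (Fin n) ℝ) (hA : IsUnit A.det)
    (v : EuclideanSpace ℝ (Fin n)) (hv : v ∈ latticeOf A) (hv0 : v ≠ 0) :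
    (∃ z ∈ voronoiCell (latticeOf A),
        (inner ℝ z v : ℝ) = (1 / 2 : ℝ) * (inner ℝ v v : ℝ)) ↔
      (∀ w : EuclideanSpace ℝ (Fin n), (∃ x ∈ latticeOf A, w = v + (2 : ℝ) • x) →
        ‖v‖ ≤ ‖w‖) := by
  constructor
  · rintro ⟨z, hz, hzv⟩ w ⟨x, hx, rfl⟩
    -- From the Voronoi point z, test against -x and v + x.
    have h1 : ‖z‖ ≤ ‖z - (-x)‖ := hz (-x) (latticeOf_neg hx)
    have h2 : ‖z‖ ≤ ‖z - (v + x)‖ := hz (v + x) (latticeOf_add hv hx)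
    have h1' : ‖z‖ ^ 2 ≤ ‖z - (-x)‖ ^ 2 := by
      nlinarith [norm_nonneg z, norm_nonneg (z - (-x))]
    have h2' : ‖z‖ ^ 2 ≤ ‖z - (v + x)‖ ^ 2 := by
      nlinarith [norm_nonneg z, norm_nonneg (z - (v + x))]
    have e1 : ‖z - (-x)‖ ^ 2 = ‖z‖ ^ 2 + 2 * (inner ℝ z x : ℝ) + ‖x‖ ^ 2 := by
      rw [sub_neg_eq_add, norm_add_sq_real]
    have e2 : ‖z - (v + x)‖ ^ 2
        = ‖z‖ ^ 2 - 2 * ((inner ℝ z v : ℝ) + (inner ℝ z x : ℝ))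
          + (‖v‖ ^ 2 + 2 * (inner ℝ v x : ℝ) + ‖x‖ ^ 2) := by
      rw [norm_sub_sq_real, inner_add_right, norm_add_sq_real]
    have ew : ‖v + (2 : ℝ) • x‖ ^ 2 = ‖v‖ ^ 2 + 4 * (inner ℝ v x : ℝ) + 4 * ‖x‖ ^ 2 := by
      rw [norm_add_sq_real, real_inner_smul_right, norm_smul]
      simp [Real.norm_ofNat]
      ring
    have hvv : (inner ℝ v v : ℝ) = ‖v‖ ^ 2 := real_inner_self_eq_norm_sq v
    have key : ‖v‖ ^ 2 ≤ ‖v + (2 : ℝ) • x‖ ^ 2 := by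
      rw [ew]; rw [e1] at h1'; rw [e2] at h2'
      nlinarith [hzv, hvv]
    nlinarith [norm_nonneg v, norm_nonneg (v + (2 : ℝ) • x)]
  · intro hmin
    refine ⟨(1 / 2 : ℝ) • v, fun u hu => ?_, ?_⟩
    · have key : ‖v‖ ≤ ‖v + (2 : ℝ) • (-u)‖ := hmin _ ⟨-u, latticeOf_neg hu, rfl⟩
      have h : (1 / 2 : ℝ) • v - u = (1 / 2 : ℝ) • (v + (2 : ℝ) • (-u)) := by
        rw [smul_add, smul_smul, smul_neg]
        norm_num [sub_eq_add_neg]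
      rw [h, norm_smul, norm_smul]
      have := mul_le_mul_of_nonneg_left key (norm_nonneg (1/2 : ℝ))
      linarith
    · rw [real_inner_smul_left]
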